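/- Every normalizing Haar unitary is B-valued R-diagonal. Precisely: if u is a unitary in a B-valued *-noncommutative probability space (A,E) such that E(u^k)=0 for all nonzero integers k, and u normalizes B (i.e., ubu* and u*bu lie in B for all b in B), then u satisfies the moment condition defining B-valued R-diagonal elements: all odd alternating moments E(u b_1 u* b_2 u ... u) vanish, and for all n≥1, ε∈{1,*}^n, b_1,...,b_n ∈ B, the expectation of the product over blocks V of the maximal alternating interval partition σ(ε) of the centered block products vanishes. -/

import Mathlib

open scoped BigOperators

theorem bool_ne_imp {a b : Bool} (h : a ≠ b) : b = !a := by
  cases a <;> cases b <;> simp_all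

/-- The trailing unitary factor of an alternating word. -/
def wend {A : Type*} [Ring A] [StarRing A] (u : A) : List (Bool × A) → A
  | [] => 1
  | p :: V => if V.length % 2 = 1 then 1 else if p.1 then u else star u

/-- In an odd alternating word the first and last signs coincide. -/
theorem lastHeadSign {A : Type*} :
    ∀ (V : List (Bool × A)), V.Chain' (fun p q => p.1 ≠ q.1) →
      V.length % 2 = 1 → V.getLast?.map Prod.fst = V.head?.map Prod.fst
  | [] => by simp
  | [p] => by simp
  | [p, q] => by intro _ h; simp at h
  | p :: q :: r :: V => by
    intro hc hl
    have hc1 : p.1 ≠ q.1 := (List.isChain_cons_cons.mp hc).1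
    have hc2 := (List.isChain_cons_cons.mp hc).2
    have hc3 : q.1 ≠ r.1 := (List.isChain_cons_cons.mp hc2).1
    have hc4 : List.Chain' (fun p q : Bool × A => p.1 ≠ q.1) (r :: V) :=
      (List.isChain_cons_cons.mp hc2).2
    have hl' : (r :: V).length % 2 = 1 := by
      simp only [List.length_cons] at hl ⊢; omega
    have IH := lastHeadSign (r :: V) hc4 hl'
    rw [List.getLast?_cons_cons, List.getLast?_cons_cons, IH]
    have : r.1 = p.1 := by
      cases hp : p.1 <;> cases hq : q.1 <;> cases hr : r.1 <;> simp_all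
    simp [this]

/-- An alternating word is (an element of B) times its trailing unitary factor. -/
theorem blockProd {A : Type*} [Ring A] [StarRing A] [Algebra ℂ A] [StarModule ℂ A]
    (B : StarSubalgebra ℂ A) (u : A) (huu : u * star u = 1) (hsuu : star u * u = 1)
    (hnorm : ∀ b ∈ B, u * b * star u ∈ B ∧ star u * b * u ∈ B) :
    ∀ V : List (Bool × A), (∀ p ∈ V, p.2 ∈ B) → V.Chain' (fun p q => p.1 ≠ q.1) →
      ∃ c, c ∈ B ∧ (V.map fun p => (if p.1 then u else star u) * p.2).prod = c * wend u V := by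
  intro V
  induction V with
  | nil => exact fun _ _ => ⟨1, B.one_mem, by simp [wend]⟩
  | cons p V ih =>
    intro hmem hch
    obtain ⟨c, hcB, hc⟩ := ih (fun q hq => hmem q (List.mem_cons_of_mem _ hq)) hch.tail
    set us : A := if p.1 then u else star u with hus
    set vs : A := if p.1 then star u else u with hvs
    have hvsus : vs * us = 1 := by
      rw [hvs, hus]; cases hp : p.1 <;> simp [huu, hsuu]
    have husvs : us * vs = 1 := by
      rw [hvs, hus]; cases hp : p.1 <;> simp [huu, hsuu]
    have hdB : p.2 * c ∈ B := B.mul_mem (hmem p (List.mem_cons_self)) hcB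
    have hconjB : us * (p.2 * c) * vs ∈ B := by
      rw [hvs, hus]; cases hp : p.1
      · simpa using (hnorm _ hdB).2
      · simpa using (hnorm _ hdB).1
    have hkey : us * (p.2 * c) = us * (p.2 * c) * vs * us := by
      rw [mul_assoc, hvsus, mul_one]
    have hprod : ((p :: V).map fun q => (if q.1 then u else star u) * q.2).prod
        = (us * (p.2 * c) * vs) * (us * wend u V) := by
      rw [List.map_cons, List.prod_cons, hc, ← mul_assoc, mul_assoc _ p.2 c, ← hus]
      rw [← mul_assoc (us * (p.2 * c) * vs) us (wend u V), ← hkey, mul_assoc]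
    cases V with
    | nil =>
      refine ⟨us * (p.2 * c) * vs, hconjB, ?_⟩
      rw [hprod]
      have h2 : wend u [p] = us := by
        simp only [wend, List.length_nil]
        rw [if_neg (by omega), hus]
      have h1 : wend u ([] : List (Bool × A)) = 1 := rfl
      rw [h1, h2, mul_one]
    | cons q V' =>
      by_cases h : V'.length % 2 = 1
      · refine ⟨us * (p.2 * c) * vs, hconjB, ?_⟩
        rw [hprod]
        have h1 : wend u (q :: V') = 1 := by
          simp only [wend]; rw [if_pos h]
        have hlen : (q :: V').length % 2 ≠ 1 := by
          simp only [List.length_cons]; omega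
        have h2 : wend u (p :: q :: V') = us := by
          simp only [wend]; rw [if_neg hlen, hus]
        rw [h1, h2, mul_one]
      · refine ⟨us * (p.2 * c) * vs, hconjB, ?_⟩
        rw [hprod]
        have hq1 : q.1 = !p.1 := bool_ne_imp (List.isChain_cons_cons.mp hch).1
        have h1 : wend u (q :: V') = vs := by
          simp only [wend]
          rw [if_neg h, hq1, hvs]
          cases hp : p.1 <;> simp
        have hlen : (q :: V').length % 2 = 1 := by
          simp only [List.length_cons]; omega
        have h2 : wend u (p :: q :: V') = 1 := by
          simp only [wend]; rw [if_pos hlen]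
        rw [h1, h2, mul_one, ← mul_assoc, mul_assoc _ us vs, husvs, mul_one]

/-- Every normalizing Haar unitary is B-valued R-diagonal (moment condition):
odd alternating moments vanish, and the centered products over the blocks of any
maximal alternating interval partition have vanishing expectation. -/
theorem normalizing_haar_unitary_is_rdiagonal
    {A : Type*} [Ring A] [StarRing A] [Algebra ℂ A] [StarModule ℂ A]
    (B : StarSubalgebra ℂ A) (E : A →ₗ[ℂ] A)
    (hErange : ∀ a : A, E a ∈ B)
    (hEid : ∀ b ∈ B, E b = b)
    (hEstar : ∀ a : A, E (star a) = star (E a))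
    (hEbimod : ∀ a : A, ∀ b₁ ∈ B, ∀ b₂ ∈ B, E (b₁ * a * b₂) = b₁ * E a * b₂)
    (u : A) (huu : u * star u = 1) (hsuu : star u * u = 1)
    (hHaar : ∀ k : ℕ, k ≠ 0 → E (u ^ k) = 0 ∧ E (star u ^ k) = 0)
    (hnorm : ∀ b ∈ B, u * b * star u ∈ B ∧ star u * b * u ∈ B) :
    -- odd alternating moments vanish:
    (∀ (k : ℕ) (b₁ b₂ : Fin k → A), (∀ i, b₁ i ∈ B) → (∀ i, b₂ i ∈ B) →
      E (u * (List.ofFn fun i => b₁ i * star u * b₂ i * u).prod) = 0) ∧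
    -- centered block products over the maximal alternating interval partition vanish:
    (∀ blocks : List (List (Bool × A)), blocks ≠ [] →
      (∀ V ∈ blocks, V ≠ []) →
      (∀ V ∈ blocks, ∀ p ∈ V, p.2 ∈ B) →
      -- each block is alternating:
      (∀ V ∈ blocks, V.Chain' fun p q => p.1 ≠ q.1) →
      -- maximality: adjacent blocks meet with equal signs:
      blocks.Chain' (fun V W => V.getLast?.map Prod.fst = W.head?.map Prod.fst) →
      E ((blocks.map fun V =>
            ((V.map fun p => (if p.1 then u else star u) * p.2).prod)
              - E ((V.map fun p => (if p.1 then u else star u) * p.2).prod)).prod) = 0) := by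
  have hEu : E u = 0 := by
    have := (hHaar 1 one_ne_zero).1; rwa [pow_one] at this
  have hEsu : E (star u) = 0 := by
    have := (hHaar 1 one_ne_zero).2; rwa [pow_one] at this
  constructor
  · -- part 1
    intro k b₁ b₂ h1 h2
    have hfac : ∀ i, b₁ i * star u * b₂ i * u ∈ B := by
      intro i
      have h := B.mul_mem (h1 i) (hnorm _ (h2 i)).2
      have e : b₁ i * (star u * b₂ i * u) = b₁ i * star u * b₂ i * u := by
        rw [← mul_assoc, ← mul_assoc]
      rwa [e] at h
    have hprod : (List.ofFn fun i => b₁ i * star u * b₂ i * u).prod ∈ B := by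
      refine list_prod_mem ?_
      intro x hx
      rw [List.mem_ofFn] at hx
      obtain ⟨i, rfl⟩ := hx
      exact hfac i
    have hb := hEbimod u 1 B.one_mem _ hprod
    rw [one_mul] at hb
    rw [hb, hEu, one_mul, zero_mul]
  · -- part 2
    intro blocks hne hVne hmemB halt hchain
    -- characterization of the centered factors
    have hcent : ∀ V : List (Bool × A), (∀ p ∈ V, p.2 ∈ B) →
        V.Chain' (fun p q => p.1 ≠ q.1) → V ≠ [] →
        ((V.length % 2 = 0 →
            (V.map fun p => (if p.1 then u else star u) * p.2).prod
              - E ((V.map fun p => (if p.1 then u else star u) * p.2).prod) = 0) ∧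
         (∀ s : Bool, V.head?.map Prod.fst = some s → V.length % 2 = 1 →
            ∃ c, c ∈ B ∧
              (V.map fun p => (if p.1 then u else star u) * p.2).prod
                - E ((V.map fun p => (if p.1 then u else star u) * p.2).prod)
              = c * (if s then u else star u))) := by
      intro V hm hc hne0
      obtain ⟨c, hcB, hP⟩ := blockProd B u huu hsuu hnorm V hm hc
      obtain ⟨p, V', rfl⟩ := List.exists_cons_of_ne_nil hne0
      constructor
      · intro hev
        have hV' : V'.length % 2 = 1 := by
          simp only [List.length_cons] at hev; omega
        have hw : wend u (p :: V') = 1 := by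
          simp only [wend]; rw [if_pos hV']
        rw [hP, hw, mul_one, hEid c hcB, sub_self]
      · intro s hs hodd
        have hsp : s = p.1 := by
          simp only [List.head?_cons, Option.map_some] at hs
          exact (Option.some_injective _ hs).symm
        have hV' : V'.length % 2 ≠ 1 := by
          simp only [List.length_cons] at hodd; omega
        have hw : wend u (p :: V') = if s then u else star u := by
          simp only [wend]; rw [if_neg hV', hsp]
        have hEP : E (((p :: V').map fun p => (if p.1 then u else star u) * p.2).prod) = 0 := by
          rw [hP, hw]
          have hb := hEbimod (if s then u else star u) c hcB 1 B.one_mem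
          rw [mul_one, mul_one] at hb
          rw [hb]
          cases s
          · rw [if_neg (by simp), hEsu, mul_zero]
          · rw [if_pos rfl, hEu, mul_zero]
        exact ⟨c, hcB, by rw [hEP, sub_zero, hP, hw]⟩
    by_cases hodd : ∀ V ∈ blocks, V.length % 2 = 1
    · -- all blocks odd: heads all carry the same sign
      have hheads : ∀ (s : Bool) (bls : List (List (Bool × A))),
          bls.Chain' (fun V W => V.getLast?.map Prod.fst = W.head?.map Prod.fst) →
          (∀ V ∈ bls, V.Chain' fun p q => p.1 ≠ q.1) →
          (∀ V ∈ bls, V.length % 2 = 1) →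
          (∀ V ∈ bls.head?, V.head?.map Prod.fst = some s) →
          ∀ V ∈ bls, V.head?.map Prod.fst = some s := by
        intro s bls
        induction bls with
        | nil => intro _ _ _ _ V hV; simp at hV
        | cons W rest ih =>
          intro hch halt' hodd' hh V hV
          have hW : W.head?.map Prod.fst = some s := hh W rfl
          rcases List.mem_cons.mp hV with rfl | hV'
          · exact hW
          · refine ih hch.tail (fun X hX => halt' X (List.mem_cons_of_mem _ hX))
              (fun X hX => hodd' X (List.mem_cons_of_mem _ hX)) ?_ V hV'
            intro X hX
            have hrel := (List.isChain_cons.mp hch).1 X hX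
            have hlast := lastHeadSign W (halt' W (List.mem_cons_self))
              (hodd' W (List.mem_cons_self))
            rw [← hrel, hlast]
            exact hW
      have key : ∀ (s : Bool) (bls : List (List (Bool × A))),
          (∀ V ∈ bls, V ≠ []) → (∀ V ∈ bls, ∀ p ∈ V, p.2 ∈ B) →
          (∀ V ∈ bls, V.Chain' fun p q => p.1 ≠ q.1) →
          (∀ V ∈ bls, V.length % 2 = 1) →
          (∀ V ∈ bls, V.head?.map Prod.fst = some s) →
          ∃ c, c ∈ B ∧ (bls.map fun V =>
              ((V.map fun p => (if p.1 then u else star u) * p.2).prod)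
                - E ((V.map fun p => (if p.1 then u else star u) * p.2).prod)).prod
            = c * (if s then u else star u) ^ bls.length := by
        intro s bls
        induction bls with
        | nil => exact fun _ _ _ _ _ => ⟨1, B.one_mem, by simp⟩
        | cons W rest ih =>
          intro h1 h2 h3 h4 h5
          obtain ⟨c, hcB, hc⟩ := ih (fun X hX => h1 X (List.mem_cons_of_mem _ hX))
            (fun X hX => h2 X (List.mem_cons_of_mem _ hX))
            (fun X hX => h3 X (List.mem_cons_of_mem _ hX))
            (fun X hX => h4 X (List.mem_cons_of_mem _ hX))
            (fun X hX => h5 X (List.mem_cons_of_mem _ hX))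
          obtain ⟨d, hdB, hd⟩ := (hcent W (h2 W (List.mem_cons_self))
            (h3 W (List.mem_cons_self)) (h1 W (List.mem_cons_self))).2 s
            (h5 W (List.mem_cons_self)) (h4 W (List.mem_cons_self))
          have hvw : (if s then star u else u) * (if s then u else star u) = 1 := by
            cases s <;> simp [huu, hsuu]
          have hconjB : (if s then u else star u) * c * (if s then star u else u) ∈ B := by
            cases s
            · simpa using (hnorm _ hcB).2
            · simpa using (hnorm _ hcB).1
          refine ⟨d * ((if s then u else star u) * c * (if s then star u else u)),
            B.mul_mem hdB hconjB, ?_⟩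
          rw [List.map_cons, List.prod_cons, hd, hc]
          have e1 : ((if s then u else star u) * c * (if s then star u else u))
              * (if s then u else star u) = (if s then u else star u) * c := by
            rw [mul_assoc ((if s then u else star u) * c), hvw, mul_one]
          simp only [List.length_cons]
          calc d * (if s then u else star u) * (c * (if s then u else star u) ^ rest.length)
              = d * (((if s then u else star u) * c) * (if s then u else star u) ^ rest.length) := by
                rw [mul_assoc, ← mul_assoc (if s then u else star u) c]
            _ = d * ((((if s then u else star u) * c * (if s then star u else u))
                  * (if s then u else star u)) * (if s then u else star u) ^ rest.length) := by
                rw [e1]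
            _ = d * ((if s then u else star u) * c * (if s then star u else u))
                  * (if s then u else star u) ^ (rest.length + 1) := by
                rw [mul_assoc _ (if s then u else star u) _, ← pow_succ', ← mul_assoc]
      obtain ⟨V₀, rest, rfl⟩ := List.exists_cons_of_ne_nil hne
      obtain ⟨p₀, V₀', hV₀⟩ := List.exists_cons_of_ne_nil (hVne _ (List.mem_cons_self))
      have hhead0 : ∀ V ∈ (V₀ :: rest).head?, V.head?.map Prod.fst = some p₀.1 := by
        intro X hX
        have hXV : V₀ = X := by simpa using hX
        rw [← hXV, hV₀]
        simp
      have hheads' := hheads p₀.1 (V₀ :: rest) hchain halt hodd hhead0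
      obtain ⟨c, hcB, hc⟩ := key p₀.1 (V₀ :: rest) hVne hmemB halt hodd hheads'
      rw [hc]
      have hm : (V₀ :: rest).length ≠ 0 := by simp
      have hpow : E ((if p₀.1 then u else star u) ^ (V₀ :: rest).length) = 0 := by
        cases hp : p₀.1
        · rw [if_neg (by simp)]; exact (hHaar _ hm).2
        · rw [if_pos rfl]; exact (hHaar _ hm).1
      have hb := hEbimod ((if p₀.1 then u else star u) ^ (V₀ :: rest).length) c hcB 1 B.one_mem
      rw [mul_one, mul_one] at hb
      rw [hb, hpow, mul_zero]
    · -- some block even: its centered factor vanishes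
      push_neg at hodd
      obtain ⟨V, hV, hVo⟩ := hodd
      have hev : V.length % 2 = 0 := by omega
      have h0 := (hcent V (hmemB V hV) (halt V hV) (hVne V hV)).1 hev
      have hmem0 : (0 : A) ∈ blocks.map fun V =>
          ((V.map fun p => (if p.1 then u else star u) * p.2).prod)
            - E ((V.map fun p => (if p.1 then u else star u) * p.2).prod) :=
        List.mem_map.mpr ⟨V, hV, h0⟩
      rw [List.prod_eq_zero hmem0, map_zero]
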